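/- For every α ∈ (−1, 1) and every ω ∈ ℝ, the function x ↦ e^{iωx} e^{αx} sech(x) is integrable on ℝ and ∫_ℝ e^{iωx} e^{αx} sech(x) dx = π / cosh(π(ω − iα)/2). Consequently, the characteristic exponent of the compound Poisson process with jump measure ν(dx) = e^{αx} sech(x) dx, namely ψ(ω) = ∫_ℝ (e^{iωx} − 1) e^{αx} sech(x) dx, equals π/cosh(π(ω − iα)/2) − π/cos(πα/2). -/

import Mathlib

open MeasureTheory Complex Real


noncomputable def gg (x : ℝ) : ℝ := 1 - (1 + Real.exp (2*x))⁻¹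

lemma gg_pos_ne (x : ℝ) : (1 + Real.exp (2*x)) ≠ 0 := by positivity

lemma gg_hasDerivAt (x : ℝ) :
    HasDerivAt gg (2 * Real.exp (2*x) / (1 + Real.exp (2*x))^2) x := by
  have h1 : HasDerivAt (fun x : ℝ => 1 + Real.exp (2*x)) (2 * Real.exp (2*x)) x := by
    have := (((hasDerivAt_id x).const_mul 2).exp).const_add 1
    simpa [mul_comm] using this
  have h2 := ((hasDerivAt_const x (1:ℝ)).sub (h1.inv (gg_pos_ne x)))
  refine (h2 : HasDerivAt gg _ x).congr_deriv ?_
  ring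

lemma gg_strictMono : StrictMono gg := by
  intro x y hxy
  have : Real.exp (2*x) < Real.exp (2*y) := Real.exp_lt_exp.2 (by linarith)
  have h1 : (0:ℝ) < 1 + Real.exp (2*x) := by positivity
  have h3 : (1 + Real.exp (2*y))⁻¹ < (1 + Real.exp (2*x))⁻¹ :=
    inv_strictAnti₀ h1 (by linarith)
  simp only [gg]
  linarith

lemma gg_mem (x : ℝ) : gg x ∈ Set.Ioo (0:ℝ) 1 := by
  have h1 : (0:ℝ) < Real.exp (2*x) := Real.exp_pos _
  have h2 : (0:ℝ) < 1 + Real.exp (2*x) := by positivity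
  constructor
  · have : (1 + Real.exp (2*x))⁻¹ < 1 := by
      rw [inv_lt_one_iff₀]; right; linarith
    simp [gg]; linarith
  · have : 0 < (1 + Real.exp (2*x))⁻¹ := by positivity
    simp [gg]; linarith

lemma gg_image : gg '' Set.univ = Set.Ioo (0:ℝ) 1 := by
  apply Set.Subset.antisymm
  · rintro _ ⟨x, -, rfl⟩; exact gg_mem x
  · rintro y ⟨hy0, hy1⟩
    refine ⟨Real.log (y/(1-y)) / 2, trivial, ?_⟩
    have h1 : (0:ℝ) < 1 - y := by linarith
    have h2 : (0:ℝ) < y / (1-y) := by positivity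
    have : Real.exp (2 * (Real.log (y/(1-y)) / 2)) = y/(1-y) := by
      rw [show 2 * (Real.log (y/(1-y)) / 2) = Real.log (y/(1-y)) by ring, Real.exp_log h2]
    rw [gg, this]
    field_simp
    ring

lemma cpow_real_exp (t : ℝ) (w : ℂ) : ((Real.exp t : ℝ) : ℂ) ^ w = Complex.exp (w * t) := by
  rw [Complex.cpow_def_of_ne_zero (by exact_mod_cast (Real.exp_pos t).ne')]
  rw [← Complex.ofReal_log (Real.exp_pos t).le, Real.log_exp, mul_comm]

lemma gg_eq_exp (x : ℝ) : gg x = Real.exp (x - Real.log (2*Real.cosh x)) := by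
  have hcosh : (0:ℝ) < 2 * Real.cosh x := by positivity
  rw [Real.exp_sub, Real.exp_log hcosh, Real.cosh_eq, gg, Real.exp_neg]
  have hc : Real.exp (2*x) = Real.exp x * Real.exp x := by rw [← Real.exp_add]; ring_nf
  have h0 := Real.exp_pos x
  rw [hc]
  field_simp
  ring

lemma one_sub_gg_eq_exp (x : ℝ) : 1 - gg x = Real.exp (-x - Real.log (2*Real.cosh x)) := by
  have hcosh : (0:ℝ) < 2 * Real.cosh x := by positivity
  rw [Real.exp_sub, Real.exp_log hcosh, Real.cosh_eq, gg, Real.exp_neg]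
  have hc : Real.exp (2*x) = Real.exp x * Real.exp x := by rw [← Real.exp_add]; ring_nf
  have h0 := Real.exp_pos x
  rw [hc]
  field_simp
  ring

lemma gg_deriv_eq (x : ℝ) :
    2 * Real.exp (2*x) / (1 + Real.exp (2*x))^2 = 1 / (2 * Real.cosh x ^ 2) := by
  have hc : Real.exp (2*x) = Real.exp x * Real.exp x := by rw [← Real.exp_add]; ring_nf
  have h0 := Real.exp_pos x
  have hcosh := Real.cosh_pos x
  rw [hc, Real.cosh_eq, Real.exp_neg]
  field_simp
  ring

lemma ptwise (w : ℂ) (x : ℝ) :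
    |2 * Real.exp (2*x) / (1 + Real.exp (2*x))^2| •
      (((gg x : ℝ) : ℂ) ^ ((1+w)/2 - 1) * (1 - ((gg x : ℝ) : ℂ)) ^ ((1 - (1+w)/2) - 1))
      = Complex.exp (w * x) / (Real.cosh x : ℂ) := by
  have hcosh := Real.cosh_pos x
  have hM : Real.exp (Real.log (2*Real.cosh x)) = 2*Real.cosh x :=
    Real.exp_log (by positivity)
  have e1 : ((gg x : ℝ) : ℂ) ^ ((1+w)/2 - 1)
      = Complex.exp (((1+w)/2 - 1) * ((x : ℂ) - (Real.log (2*Real.cosh x) : ℝ))) := by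
    rw [gg_eq_exp, cpow_real_exp]; push_cast; ring_nf
  have e2 : (1 - ((gg x : ℝ) : ℂ)) ^ ((1 - (1+w)/2) - 1)
      = Complex.exp (((1 - (1+w)/2) - 1) * (-(x : ℂ) - (Real.log (2*Real.cosh x) : ℝ))) := by
    have : (1 : ℂ) - ((gg x : ℝ) : ℂ) = ((1 - gg x : ℝ) : ℂ) := by push_cast; ring
    rw [this, one_sub_gg_eq_exp, cpow_real_exp]; push_cast; ring_nf
  rw [e1, e2, ← Complex.exp_add, gg_deriv_eq]
  have hsum : ((1+w)/2 - 1) * ((x : ℂ) - (Real.log (2*Real.cosh x) : ℝ))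
      + ((1 - (1+w)/2) - 1) * (-(x : ℂ) - (Real.log (2*Real.cosh x) : ℝ))
      = w * x + (Real.log (2*Real.cosh x) : ℝ) := by ring
  rw [hsum, Complex.exp_add]
  have hexpM : Complex.exp ((Real.log (2*Real.cosh x) : ℝ) : ℂ) = ((2*Real.cosh x : ℝ) : ℂ) := by
    rw [← Complex.ofReal_exp, hM]
  rw [hexpM]
  have habs : |1 / (2 * Real.cosh x ^ 2)| = 1 / (2 * Real.cosh x ^ 2) := by
    rw [abs_of_pos]; positivity
  rw [habs, real_smul]
  push_cast
  have hc2 : Complex.cosh (x:ℂ) ≠ 0 := by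
    rw [← Complex.ofReal_cosh]; exact_mod_cast hcosh.ne'
  field_simp

lemma key (α : ℝ) (hα : α ∈ Set.Ioo (-1 : ℝ) 1) (ω : ℝ) :
    Integrable (fun x : ℝ =>
      Complex.exp (Complex.I * ω * x) * ((Real.exp (α * x) / Real.cosh x : ℝ) : ℂ)) ∧
    (∫ x : ℝ, Complex.exp (Complex.I * ω * x) * ((Real.exp (α * x) / Real.cosh x : ℝ) : ℂ)) =
      (π : ℂ) / Complex.cosh ((π : ℂ) * ((ω : ℂ) - Complex.I * α) / 2) := by
  obtain ⟨hα1, hα2⟩ := hα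
  set w : ℂ := Complex.I * ω + α with hw
  set s : ℂ := (1 + w)/2 with hs
  have hfun : (fun x : ℝ =>
      Complex.exp (Complex.I * ω * x) * ((Real.exp (α * x) / Real.cosh x : ℝ) : ℂ))
      = fun x : ℝ => Complex.exp (w * x) / (Real.cosh x : ℂ) := by
    funext x
    rw [hw]
    push_cast
    rw [add_mul, Complex.exp_add]
    ring
  have hsre : 0 < s.re := by
    rw [hs, hw]
    simp [Complex.div_re, Complex.add_re, Complex.mul_re]
    linarith
  have hs1re : 0 < (1 - s).re := by
    rw [hs, hw]
    simp [Complex.div_re, Complex.add_re, Complex.mul_re, Complex.sub_re]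
    linarith
  have hbeta : Complex.betaIntegral s (1-s) = (π:ℂ) / Complex.sin (π * s) := by
    have h1 := Complex.Gamma_mul_Gamma_eq_betaIntegral hsre hs1re
    rw [show s + (1-s) = 1 by ring, Complex.Gamma_one, one_mul] at h1
    rw [← h1, Complex.Gamma_mul_Gamma_one_sub]
  set f : ℝ → ℂ := fun y => (y:ℂ)^(s-1) * (1 - (y:ℂ))^((1-s)-1) with hf
  have hfeq : ∀ x : ℝ, |2 * Real.exp (2*x) / (1 + Real.exp (2*x))^2| • f (gg x)
      = Complex.exp (w * x) / (Real.cosh x : ℂ) := by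
    intro x
    simpa only [hf, ← hs] using ptwise w x
  have hderiv : ∀ x ∈ (Set.univ : Set ℝ),
      HasDerivWithinAt gg (2 * Real.exp (2*x) / (1 + Real.exp (2*x))^2) Set.univ x :=
    fun x _ => (gg_hasDerivAt x).hasDerivWithinAt
  have hinj : Set.InjOn gg Set.univ := gg_strictMono.injective.injOn
  have hIoo : IntegrableOn f (Set.Ioo 0 1) :=
    ((intervalIntegrable_iff_integrableOn_Ioc_of_le zero_le_one).mp
      (Complex.betaIntegral_convergent hsre hs1re)).mono_set Set.Ioo_subset_Ioc_self
  have hIimg : IntegrableOn f (gg '' Set.univ) := by rw [gg_image]; exact hIoo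
  have hInt2 : IntegrableOn
      (fun x => |2 * Real.exp (2*x) / (1 + Real.exp (2*x))^2| • f (gg x)) Set.univ :=
    (integrableOn_image_iff_integrableOn_abs_deriv_smul MeasurableSet.univ hderiv hinj f).mp hIimg
  have hInt3 : Integrable (fun x : ℝ => Complex.exp (w*x) / (Real.cosh x : ℂ)) := by
    rw [← integrableOn_univ]
    exact hInt2.congr_fun (fun x _ => hfeq x) MeasurableSet.univ
  have hsin : Complex.sin ((π:ℂ) * s)
      = Complex.cosh ((π : ℂ) * ((ω : ℂ) - Complex.I * α) / 2) := by
    have h2 : (π:ℂ) * s = (π:ℂ)/2 + ((π : ℂ) * ((ω : ℂ) - Complex.I * α) / 2) * Complex.I := by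
      rw [hs, hw]; ring_nf; rw [Complex.I_sq]; ring
    have hc1 : Complex.sin ((π:ℂ)/2) = 1 := by
      rw [show ((π:ℂ)/2) = ((π/2 : ℝ) : ℂ) by push_cast; ring, ← Complex.ofReal_sin,
        Real.sin_pi_div_two, Complex.ofReal_one]
    have hc2 : Complex.cos ((π:ℂ)/2) = 0 := by
      rw [show ((π:ℂ)/2) = ((π/2 : ℝ) : ℂ) by push_cast; ring, ← Complex.ofReal_cos,
        Real.cos_pi_div_two, Complex.ofReal_zero]
    rw [h2, Complex.sin_add, hc1, hc2, Complex.cos_mul_I]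
    ring
  constructor
  · rw [hfun]; exact hInt3
  · rw [hfun, ← hsin, ← hbeta]
    calc (∫ x : ℝ, Complex.exp (w*x) / (Real.cosh x : ℂ))
        = ∫ x : ℝ in Set.univ, Complex.exp (w*x) / (Real.cosh x : ℂ) := by rw [setIntegral_univ]
      _ = ∫ x : ℝ in Set.univ,
            |2 * Real.exp (2*x) / (1 + Real.exp (2*x))^2| • f (gg x) := by
          exact setIntegral_congr_fun MeasurableSet.univ (fun x _ => (hfeq x).symm)
      _ = ∫ y in gg '' Set.univ, f y :=
          (integral_image_eq_integral_abs_deriv_smul MeasurableSet.univ hderiv hinj f).symm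
      _ = ∫ y in Set.Ioo (0:ℝ) 1, f y := by rw [gg_image]
      _ = ∫ y in Set.Ioc (0:ℝ) 1, f y := (integral_Ioc_eq_integral_Ioo).symm
      _ = ∫ y in (0:ℝ)..1, f y := (intervalIntegral.integral_of_le zero_le_one).symm
      _ = Complex.betaIntegral s (1-s) := rfl

/-- For `α ∈ (−1, 1)` and `ω ∈ ℝ`, the function `x ↦ e^{iωx} e^{αx} sech x`
is integrable on `ℝ` with `∫ e^{iωx} e^{αx} sech x dx = π / cosh(π(ω − iα)/2)`.
Consequently, the characteristic exponent of the compound Poisson process with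
jump measure `e^{αx} sech x dx`, namely `ψ(ω) = ∫ (e^{iωx} − 1) e^{αx} sech x dx`,
equals `π/cosh(π(ω − iα)/2) − π/cos(πα/2)`. -/
theorem sech_jump_measure_characteristic_exponent
    (α : ℝ) (hα : α ∈ Set.Ioo (-1 : ℝ) 1) (ω : ℝ) :
    Integrable (fun x : ℝ =>
      Complex.exp (Complex.I * ω * x) * ((Real.exp (α * x) / Real.cosh x : ℝ) : ℂ)) ∧
    (∫ x : ℝ, Complex.exp (Complex.I * ω * x) *
        ((Real.exp (α * x) / Real.cosh x : ℝ) : ℂ)) =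
      (π : ℂ) / Complex.cosh ((π : ℂ) * ((ω : ℂ) - Complex.I * α) / 2) ∧
    (∫ x : ℝ, (Complex.exp (Complex.I * ω * x) - 1) *
        ((Real.exp (α * x) / Real.cosh x : ℝ) : ℂ)) =
      (π : ℂ) / Complex.cosh ((π : ℂ) * ((ω : ℂ) - Complex.I * α) / 2) -
        (π : ℂ) / ((Real.cos (π * α / 2) : ℝ) : ℂ) := by
  obtain ⟨hInt, hEq⟩ := key α hα ω
  obtain ⟨hInt0', hEq0'⟩ := key α hα 0
  have h0fun : (fun x : ℝ => Complex.exp (Complex.I * (0:ℝ) * x) *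
      ((Real.exp (α * x) / Real.cosh x : ℝ) : ℂ))
      = fun x : ℝ => ((Real.exp (α * x) / Real.cosh x : ℝ) : ℂ) := by
    funext x; simp
  rw [h0fun] at hInt0' hEq0'
  have hEq0 : (∫ x : ℝ, ((Real.exp (α * x) / Real.cosh x : ℝ) : ℂ))
      = (π : ℂ) / ((Real.cos (π * α / 2) : ℝ) : ℂ) := by
    rw [hEq0']
    congr 1
    rw [show ((π:ℂ) * (((0:ℝ):ℂ) - Complex.I * α) / 2) = ((-(π*α/2) : ℝ) : ℂ) * Complex.I by
      push_cast; ring, Complex.cosh_mul_I, ← Complex.ofReal_cos, Real.cos_neg]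
  refine ⟨hInt, hEq, ?_⟩
  have hsub : (fun x : ℝ => (Complex.exp (Complex.I * ω * x) - 1) *
      ((Real.exp (α * x) / Real.cosh x : ℝ) : ℂ))
      = fun x : ℝ => Complex.exp (Complex.I * ω * x) * ((Real.exp (α * x) / Real.cosh x : ℝ) : ℂ)
        - ((Real.exp (α * x) / Real.cosh x : ℝ) : ℂ) := by
    funext x; ring
  rw [hsub, integral_sub hInt hInt0', hEq, hEq0]
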